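/- Let I = (x₁,...,xₘ)(y₁,...,yₙ) in R = k[x₁,...,xₘ,y₁,...,yₙ]. Then depth(R/I) = 1. -/

import Mathlib

open MvPolynomial

/-- `rs` is a regular sequence on the ring `A`: the ideal it generates is proper and
each entry is a nonzerodivisor modulo the preceding ones. -/
def IsRegSeq {A : Type*} [CommRing A] (rs : List A) : Prop :=
  Ideal.span {a | a ∈ rs} ≠ ⊤ ∧
  ∀ i : Fin rs.length, ∀ b : A,
    rs.get i * b ∈ Ideal.span {a | a ∈ rs.take i} →
      b ∈ Ideal.span {a | a ∈ rs.take i}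

/-- Depth of the ring `A` with respect to an ideal `m`: the supremum of lengths of
regular sequences contained in `m`. -/
noncomputable def depthAt {A : Type*} [CommRing A] (m : Ideal A) : ℕ :=
  sSup {ℓ : ℕ | ∃ rs : List A, rs.length = ℓ ∧ (∀ a ∈ rs, a ∈ m) ∧ IsRegSeq rs}


namespace Stmt3Aux

variable (k : Type*) [Field k] (m n : ℕ)

noncomputable def Ig : Ideal (MvPolynomial (Fin m ⊕ Fin n) k) :=
  Ideal.span {f | ∃ (i : Fin m) (j : Fin n), f = X (Sum.inl i) * X (Sum.inr j)}

noncomputable def Pg : Ideal (MvPolynomial (Fin m ⊕ Fin n) k) :=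
  Ideal.span (X '' Set.range (Sum.inl : Fin m → Fin m ⊕ Fin n))

noncomputable def Qg : Ideal (MvPolynomial (Fin m ⊕ Fin n) k) :=
  Ideal.span (X '' Set.range (Sum.inr : Fin n → Fin m ⊕ Fin n))

noncomputable def Vg : Ideal (MvPolynomial (Fin m ⊕ Fin n) k) :=
  Ideal.span (Set.range (X : (Fin m ⊕ Fin n) → MvPolynomial (Fin m ⊕ Fin n) k))

lemma Ig_eq : Ig k m n = Ideal.span {f | ∃ (i : Fin m) (j : Fin n),
    f = X (Sum.inl i) * X (Sum.inr j)} := rfl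

variable {k m n}

lemma X_mul_X (a b : Fin m ⊕ Fin n) :
    (X a * X b : MvPolynomial (Fin m ⊕ Fin n) k)
      = monomial (Finsupp.single a 1 + Finsupp.single b 1) 1 := by
  have ha : (X a : MvPolynomial (Fin m ⊕ Fin n) k) = monomial (Finsupp.single a 1) 1 := rfl
  have hb : (X b : MvPolynomial (Fin m ⊕ Fin n) k) = monomial (Finsupp.single b 1) 1 := rfl
  rw [ha, hb, monomial_mul, one_mul]

lemma mem_Pg_iff {h : MvPolynomial (Fin m ⊕ Fin n) k} :
    h ∈ Pg k m n ↔ ∀ μ ∈ h.support, ∃ i : Fin m, μ (Sum.inl i) ≠ 0 := by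
  rw [Pg, mem_ideal_span_X_image]
  constructor
  · intro H μ hμ
    obtain ⟨v, hv, hvne⟩ := H μ hμ
    obtain ⟨i, rfl⟩ := hv
    exact ⟨i, hvne⟩
  · intro H μ hμ
    obtain ⟨i, hi⟩ := H μ hμ
    exact ⟨Sum.inl i, ⟨i, rfl⟩, hi⟩

lemma mem_Qg_iff {h : MvPolynomial (Fin m ⊕ Fin n) k} :
    h ∈ Qg k m n ↔ ∀ μ ∈ h.support, ∃ j : Fin n, μ (Sum.inr j) ≠ 0 := by
  rw [Qg, mem_ideal_span_X_image]
  constructor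
  · intro H μ hμ
    obtain ⟨v, hv, hvne⟩ := H μ hμ
    obtain ⟨j, rfl⟩ := hv
    exact ⟨j, hvne⟩
  · intro H μ hμ
    obtain ⟨j, hj⟩ := H μ hμ
    exact ⟨Sum.inr j, ⟨j, rfl⟩, hj⟩

lemma single_add_single_le {a b : Fin m ⊕ Fin n} (hab : a ≠ b) (μ : (Fin m ⊕ Fin n) →₀ ℕ) :
    Finsupp.single a 1 + Finsupp.single b 1 ≤ μ ↔ μ a ≠ 0 ∧ μ b ≠ 0 := by
  rw [Finsupp.le_def]
  constructor
  · intro H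
    constructor
    · have := H a
      simp [Finsupp.single_apply, hab, Ne.symm hab] at this
      omega
    · have := H b
      simp [Finsupp.single_apply, hab, Ne.symm hab] at this
      omega
  · rintro ⟨h1, h2⟩ v
    rw [Finsupp.add_apply, Finsupp.single_apply, Finsupp.single_apply]
    split_ifs with hA hB hB
    · exact absurd (hA.trans hB.symm) hab
    · subst hA; omega
    · subst hB; omega
    · omega

lemma mem_Ig_iff {h : MvPolynomial (Fin m ⊕ Fin n) k} :
    h ∈ Ig k m n ↔ ∀ μ ∈ h.support,
      ∃ (i : Fin m) (j : Fin n), μ (Sum.inl i) ≠ 0 ∧ μ (Sum.inr j) ≠ 0 := by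
  have hset : {f : MvPolynomial (Fin m ⊕ Fin n) k | ∃ (i : Fin m) (j : Fin n),
        f = X (Sum.inl i) * X (Sum.inr j)}
      = (fun s => monomial s (1 : k)) '' {s | ∃ (i : Fin m) (j : Fin n),
          s = Finsupp.single (Sum.inl i) 1 + Finsupp.single (Sum.inr j) 1} := by
    ext f
    constructor
    · rintro ⟨i, j, rfl⟩
      exact ⟨_, ⟨i, j, rfl⟩, (X_mul_X _ _).symm⟩
    · rintro ⟨s, ⟨i, j, rfl⟩, rfl⟩
      exact ⟨i, j, (X_mul_X _ _).symm⟩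
  rw [Ig, hset, mem_ideal_span_monomial_image]
  constructor
  · intro H μ hμ
    obtain ⟨s, ⟨i, j, rfl⟩, hle⟩ := H μ hμ
    obtain ⟨h1, h2⟩ := (single_add_single_le (by simp) μ).1 hle
    exact ⟨i, j, h1, h2⟩
  · intro H μ hμ
    obtain ⟨i, j, h1, h2⟩ := H μ hμ
    exact ⟨_, ⟨i, j, rfl⟩, (single_add_single_le (by simp) μ).2 ⟨h1, h2⟩⟩

lemma shift_support {v : Fin m ⊕ Fin n} {h : MvPolynomial (Fin m ⊕ Fin n) k}
    {μ : (Fin m ⊕ Fin n) →₀ ℕ} (hμ : μ ∈ h.support) :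
    Finsupp.single v 1 + μ ∈ (X v * h).support := by
  rw [mem_support_iff] at hμ ⊢
  rwa [coeff_X_mul]

lemma inl_mul_mem_Qg {i₀ : Fin m} {h : MvPolynomial (Fin m ⊕ Fin n) k}
    (H : X (Sum.inl i₀) * h ∈ Qg k m n) : h ∈ Qg k m n := by
  rw [mem_Qg_iff] at H ⊢
  intro μ hμ
  obtain ⟨j, hj⟩ := H _ (shift_support hμ)
  simp [Finsupp.single_apply] at hj
  exact ⟨j, hj⟩

lemma inr_mul_mem_Pg {j₀ : Fin n} {h : MvPolynomial (Fin m ⊕ Fin n) k}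
    (H : X (Sum.inr j₀) * h ∈ Pg k m n) : h ∈ Pg k m n := by
  rw [mem_Pg_iff] at H ⊢
  intro μ hμ
  obtain ⟨i, hi⟩ := H _ (shift_support hμ)
  simp [Finsupp.single_apply] at hi
  exact ⟨i, hi⟩

lemma inl_mul_mem_Ig {i₀ : Fin m} {h : MvPolynomial (Fin m ⊕ Fin n) k}
    (H : X (Sum.inl i₀) * h ∈ Ig k m n) : h ∈ Qg k m n := by
  rw [mem_Ig_iff] at H
  rw [mem_Qg_iff]
  intro μ hμ
  obtain ⟨i, j, hi, hj⟩ := H _ (shift_support hμ)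
  simp [Finsupp.single_apply] at hj
  exact ⟨j, hj⟩

lemma inr_mul_mem_Ig {j₀ : Fin n} {h : MvPolynomial (Fin m ⊕ Fin n) k}
    (H : X (Sum.inr j₀) * h ∈ Ig k m n) : h ∈ Pg k m n := by
  rw [mem_Ig_iff] at H
  rw [mem_Pg_iff]
  intro μ hμ
  obtain ⟨i, j, hi, hj⟩ := H _ (shift_support hμ)
  simp [Finsupp.single_apply] at hi
  exact ⟨i, hi⟩

lemma Pg_inf_Qg_le : ∀ {h : MvPolynomial (Fin m ⊕ Fin n) k},
    h ∈ Pg k m n → h ∈ Qg k m n → h ∈ Ig k m n := by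
  intro h hP hQ
  rw [mem_Pg_iff] at hP
  rw [mem_Qg_iff] at hQ
  rw [mem_Ig_iff]
  intro μ hμ
  obtain ⟨i, hi⟩ := hP μ hμ
  obtain ⟨j, hj⟩ := hQ μ hμ
  exact ⟨i, j, hi, hj⟩

lemma Ig_le_Pg : Ig k m n ≤ Pg k m n := by
  rw [Ig, Ideal.span_le]
  rintro f ⟨i, j, rfl⟩
  exact Ideal.mul_mem_right _ _ (Ideal.subset_span ⟨Sum.inl i, ⟨i, rfl⟩, rfl⟩)

lemma Ig_le_Qg : Ig k m n ≤ Qg k m n := by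
  rw [Ig, Ideal.span_le]
  rintro f ⟨i, j, rfl⟩
  exact Ideal.mul_mem_left _ _ (Ideal.subset_span ⟨Sum.inr j, ⟨j, rfl⟩, rfl⟩)

lemma Ig_le_Vg : Ig k m n ≤ Vg k m n := by
  rw [Ig, Ideal.span_le]
  rintro f ⟨i, j, rfl⟩
  exact Ideal.mul_mem_right _ _ (Ideal.subset_span ⟨Sum.inl i, rfl⟩)

lemma Pg_mul_Qg_le : Pg k m n * Qg k m n ≤ Ig k m n := by
  rw [Pg, Qg, Ideal.span_mul_span, Ideal.span_le]
  intro f hf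
  rw [Set.mem_mul] at hf
  obtain ⟨s, ⟨v, ⟨i, rfl⟩, rfl⟩, t, ⟨w, ⟨j, rfl⟩, rfl⟩, rfl⟩ := hf
  exact Ideal.subset_span ⟨i, j, rfl⟩

lemma one_not_mem_Vg : (1 : MvPolynomial (Fin m ⊕ Fin n) k) ∉ Vg k m n := by
  intro H
  rw [Vg, ← Set.image_univ, mem_ideal_span_X_image] at H
  obtain ⟨v, _, hv⟩ := H 0 (by
    rw [mem_support_iff]
    simp)
  simp at hv

lemma Vg_eq_sup : Vg k m n = Pg k m n ⊔ Qg k m n := by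
  rw [Vg, Pg, Qg, ← Ideal.span_union, ← Set.image_union, Set.range_inl_union_range_inr,
    Set.image_univ]

end Stmt3Aux


namespace Stmt3Aux
variable (k : Type*) [Field k] (m n : ℕ)

abbrev Aq := MvPolynomial (Fin m ⊕ Fin n) k ⧸ Ig k m n

noncomputable abbrev mkq : MvPolynomial (Fin m ⊕ Fin n) k →+* Aq k m n := Ideal.Quotient.mk (Ig k m n)

end Stmt3Aux


set_option maxHeartbeats 1000000 in
set_option synthInstance.maxHeartbeats 200000 in
/-- For `I = (x₁,…,xₘ)(y₁,…,yₙ)` in `R = k[x₁,…,xₘ,y₁,…,yₙ]` (`m, n ≥ 1`),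
`depth R/I = 1` (depth at the irrelevant maximal ideal). -/
theorem stmt3 (k : Type*) [Field k] (m n : ℕ) (hm : 1 ≤ m) (hn : 1 ≤ n)
    (I : Ideal (MvPolynomial (Fin m ⊕ Fin n) k))
    (hI : I = Ideal.span {f | ∃ (i : Fin m) (j : Fin n),
      f = X (Sum.inl i) * X (Sum.inr j)}) :
    depthAt (Ideal.span (Set.range fun v => Ideal.Quotient.mk I (X v))) = 1 := by
  rw [← Stmt3Aux.Ig_eq] at hI
  subst hI
  set mA : Ideal (Stmt3Aux.Aq k m n) :=
    Ideal.span (Set.range fun v => Stmt3Aux.mkq k m n (X v)) with hmA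
  set PA : Ideal (Stmt3Aux.Aq k m n) :=
    Ideal.map (Stmt3Aux.mkq k m n) (Stmt3Aux.Pg k m n) with hPA
  set QA : Ideal (Stmt3Aux.Aq k m n) :=
    Ideal.map (Stmt3Aux.mkq k m n) (Stmt3Aux.Qg k m n) with hQA
  have i₀ : Fin m := ⟨0, hm⟩
  have j₀ : Fin n := ⟨0, hn⟩
  -- mA as a map
  have hmA_map : mA = Ideal.map (Stmt3Aux.mkq k m n) (Stmt3Aux.Vg k m n) := by
    rw [hmA, Stmt3Aux.Vg, Ideal.map_span, ← Set.range_comp]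
    rfl
  -- mA is proper
  have hmA_ne : mA ≠ ⊤ := by
    intro htop
    have h1 : (1 : Stmt3Aux.Aq k m n) ∈ mA := htop ▸ Submodule.mem_top
    rw [hmA_map] at h1
    obtain ⟨w, hw, hw1⟩ := Ideal.mem_image_of_mem_map_of_surjective (Stmt3Aux.mkq k m n)
      Ideal.Quotient.mk_surjective h1
    have hsub : (1 : MvPolynomial (Fin m ⊕ Fin n) k) - w ∈ Stmt3Aux.Ig k m n := by
      rw [← Ideal.Quotient.eq_zero_iff_mem]
      show Stmt3Aux.mkq k m n (1 - w) = 0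
      rw [map_sub, hw1, map_one, sub_self]
    have h1V : (1 : MvPolynomial (Fin m ⊕ Fin n) k) ∈ Stmt3Aux.Vg k m n := by
      have h2 := Ideal.add_mem _ (Stmt3Aux.Ig_le_Vg hsub) hw
      simpa using h2
    exact Stmt3Aux.one_not_mem_Vg h1V
  -- sup decomposition
  have hmA_sup : mA = PA ⊔ QA := by
    rw [hmA_map, Stmt3Aux.Vg_eq_sup, Ideal.map_sup]
  -- products vanish
  have hPQ_zero : ∀ u ∈ PA, ∀ w ∈ QA, u * w = 0 := by
    intro u hu w hw
    have h1 : u * w ∈ Ideal.map (Stmt3Aux.mkq k m n)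
        (Stmt3Aux.Pg k m n * Stmt3Aux.Qg k m n) := by
      rw [Ideal.map_mul]
      exact Ideal.mul_mem_mul hu hw
    have h2 : u * w ∈ Ideal.map (Stmt3Aux.mkq k m n) (Stmt3Aux.Ig k m n) :=
      Ideal.map_mono Stmt3Aux.Pg_mul_Qg_le h1
    rwa [Ideal.map_quotient_self, Ideal.mem_bot] at h2
  -- annihilator facts
  have hPA_of : ∀ b : Stmt3Aux.Aq k m n,
      Stmt3Aux.mkq k m n (X (Sum.inr j₀)) * b = 0 → b ∈ PA := by
    intro b hb
    obtain ⟨β, rfl⟩ := Ideal.Quotient.mk_surjective b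
    rw [← map_mul, Ideal.Quotient.eq_zero_iff_mem] at hb
    exact Ideal.mem_map_of_mem _ (Stmt3Aux.inr_mul_mem_Ig hb)
  have hQA_of : ∀ b : Stmt3Aux.Aq k m n,
      Stmt3Aux.mkq k m n (X (Sum.inl i₀)) * b = 0 → b ∈ QA := by
    intro b hb
    obtain ⟨β, rfl⟩ := Ideal.Quotient.mk_surjective b
    rw [← map_mul, Ideal.Quotient.eq_zero_iff_mem] at hb
    exact Ideal.mem_map_of_mem _ (Stmt3Aux.inl_mul_mem_Ig hb)
  -- the nonzerodivisor
  have hNZD : ∀ b : Stmt3Aux.Aq k m n,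
      Stmt3Aux.mkq k m n (X (Sum.inl i₀) + X (Sum.inr j₀)) * b = 0 → b = 0 := by
    intro b hb
    obtain ⟨h, rfl⟩ := Ideal.Quotient.mk_surjective b
    rw [← map_mul, Ideal.Quotient.eq_zero_iff_mem] at hb
    have hIg : (X (Sum.inl i₀) + X (Sum.inr j₀)) * h ∈ Stmt3Aux.Ig k m n := hb
    have hQ1 : X (Sum.inr j₀) * h ∈ Stmt3Aux.Qg k m n :=
      Ideal.mul_mem_right _ _ (Ideal.subset_span ⟨Sum.inr j₀, ⟨j₀, rfl⟩, rfl⟩)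
    have hP1 : X (Sum.inl i₀) * h ∈ Stmt3Aux.Pg k m n :=
      Ideal.mul_mem_right _ _ (Ideal.subset_span ⟨Sum.inl i₀, ⟨i₀, rfl⟩, rfl⟩)
    have hXh : X (Sum.inl i₀) * h ∈ Stmt3Aux.Qg k m n := by
      have he : X (Sum.inl i₀) * h
          = (X (Sum.inl i₀) + X (Sum.inr j₀)) * h - X (Sum.inr j₀) * h := by ring
      rw [he]
      exact Ideal.sub_mem _ (Stmt3Aux.Ig_le_Qg hIg) hQ1
    have hYh : X (Sum.inr j₀) * h ∈ Stmt3Aux.Pg k m n := by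
      have he : X (Sum.inr j₀) * h
          = (X (Sum.inl i₀) + X (Sum.inr j₀)) * h - X (Sum.inl i₀) * h := by ring
      rw [he]
      exact Ideal.sub_mem _ (Stmt3Aux.Ig_le_Pg hIg) hP1
    have hhQ : h ∈ Stmt3Aux.Qg k m n := Stmt3Aux.inl_mul_mem_Qg hXh
    have hhP : h ∈ Stmt3Aux.Pg k m n := Stmt3Aux.inr_mul_mem_Pg hYh
    rw [Ideal.Quotient.eq_zero_iff_mem]
    exact Stmt3Aux.Pg_inf_Qg_le hhP hhQ
  -- membership of generators in mA
  have hvar_mem : ∀ v : Fin m ⊕ Fin n, Stmt3Aux.mkq k m n (X v) ∈ mA := by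
    intro v
    exact Ideal.subset_span ⟨v, rfl⟩
  set f₀ : Stmt3Aux.Aq k m n := Stmt3Aux.mkq k m n (X (Sum.inl i₀) + X (Sum.inr j₀)) with hf₀
  have hf₀_mem : f₀ ∈ mA := by
    rw [hf₀, map_add]
    exact Ideal.add_mem _ (hvar_mem _) (hvar_mem _)
  -- 1 is an achievable length
  have h1S : (1 : ℕ) ∈ {ℓ : ℕ | ∃ rs : List (Stmt3Aux.Aq k m n), rs.length = ℓ ∧
      (∀ a ∈ rs, a ∈ mA) ∧ IsRegSeq rs} := by
    refine ⟨[f₀], rfl, ?_, ?_, ?_⟩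
    · intro a ha
      rw [List.mem_singleton] at ha
      subst ha
      exact hf₀_mem
    · intro htop
      have hle : Ideal.span {a : Stmt3Aux.Aq k m n | a ∈ [f₀]} ≤ mA := by
        rw [Ideal.span_le]
        intro a ha
        rw [Set.mem_setOf_eq, List.mem_singleton] at ha
        subst ha
        exact hf₀_mem
      exact hmA_ne (top_le_iff.1 (htop ▸ hle))
    · intro i b hb
      have hi0 : (i : ℕ) = 0 := by
        have hlt := i.isLt
        simp only [List.length_singleton] at hlt
        omega
      have hi : i = ⟨0, by simp⟩ := Fin.ext hi0
      subst hi
      have hempty : {a : Stmt3Aux.Aq k m n | a ∈ ([] : List (Stmt3Aux.Aq k m n))} = ∅ := by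
        ext a; simp
      have hb' : f₀ * b ∈ Ideal.span {a : Stmt3Aux.Aq k m n
          | a ∈ ([] : List (Stmt3Aux.Aq k m n))} := hb
      rw [hempty, Ideal.span_empty, Ideal.mem_bot] at hb'
      show b ∈ Ideal.span {a : Stmt3Aux.Aq k m n | a ∈ ([] : List (Stmt3Aux.Aq k m n))}
      rw [hempty, Ideal.span_empty, Ideal.mem_bot]
      exact hNZD b hb'
  -- no regular sequence of length ≥ 2
  have hub : ∀ ℓ ∈ {ℓ : ℕ | ∃ rs : List (Stmt3Aux.Aq k m n), rs.length = ℓ ∧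
      (∀ a ∈ rs, a ∈ mA) ∧ IsRegSeq rs}, ℓ ≤ 1 := by
    rintro ℓ ⟨rs, hlen, hmem, hreg⟩
    by_contra hlt
    push_neg at hlt
    rcases rs with _ | ⟨f, _ | ⟨g, t⟩⟩
    · simp at hlen; omega
    · simp at hlen; omega
    have hf_mem : f ∈ mA := hmem f (by simp)
    have hg_mem : g ∈ mA := hmem g (by simp)
    -- f is a nonzerodivisor
    have hf_nzd : ∀ b : Stmt3Aux.Aq k m n, f * b = 0 → b = 0 := by
      intro b hb
      have hempty : {a : Stmt3Aux.Aq k m n | a ∈ ([] : List (Stmt3Aux.Aq k m n))} = ∅ := by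
        ext a; simp
      have h0 : f * b ∈ Ideal.span {a : Stmt3Aux.Aq k m n
            | a ∈ ([] : List (Stmt3Aux.Aq k m n))} →
          b ∈ Ideal.span {a : Stmt3Aux.Aq k m n | a ∈ ([] : List (Stmt3Aux.Aq k m n))} :=
        hreg.2 ⟨0, by simp⟩ b
      rw [hempty, Ideal.span_empty, Ideal.mem_bot, Ideal.mem_bot] at h0
      exact h0 hb
    -- g is a nonzerodivisor mod f
    have hg_reg : ∀ b : Stmt3Aux.Aq k m n, g * b ∈ Ideal.span {f} → b ∈ Ideal.span {f} := by
      intro b hb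
      have hone : {a : Stmt3Aux.Aq k m n | a ∈ [f]} = {f} := by ext a; simp
      have h1 : g * b ∈ Ideal.span {a : Stmt3Aux.Aq k m n | a ∈ [f]} →
          b ∈ Ideal.span {a : Stmt3Aux.Aq k m n | a ∈ [f]} := hreg.2 ⟨1, by simp⟩ b
      rw [hone] at h1
      exact h1 hb
    -- decompose
    rw [hmA_sup] at hf_mem hg_mem
    obtain ⟨p, hp, q, hq, hfpq⟩ := Submodule.mem_sup.1 hf_mem
    obtain ⟨p', hp', q', hq', hgpq⟩ := Submodule.mem_sup.1 hg_mem
    have e1 : p * q' = 0 := hPQ_zero p hp q' hq'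
    have e2 : p' * q = 0 := hPQ_zero p' hp' q hq
    have h1 : g * p = p' * f := by linear_combination (-p) * hgpq + p' * hfpq + e1 - e2
    have h2 : g * q = q' * f := by linear_combination (-q) * hgpq + q' * hfpq - e1 + e2
    have hpf : p ∈ Ideal.span {f} :=
      hg_reg p (by rw [h1]; exact Ideal.mul_mem_left _ _ (Ideal.mem_span_singleton_self f))
    have hqf : q ∈ Ideal.span {f} :=
      hg_reg q (by rw [h2]; exact Ideal.mul_mem_left _ _ (Ideal.mem_span_singleton_self f))
    obtain ⟨a, ha⟩ := Ideal.mem_span_singleton'.1 hpf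
    obtain ⟨b, hb⟩ := Ideal.mem_span_singleton'.1 hqf
    have h3 : a + b - 1 = 0 := hf_nzd _ (by linear_combination ha + hb + hfpq)
    have hx1PA : Stmt3Aux.mkq k m n (X (Sum.inl i₀)) ∈ PA :=
      Ideal.mem_map_of_mem _ (Ideal.subset_span ⟨Sum.inl i₀, ⟨i₀, rfl⟩, rfl⟩)
    have hy1QA : Stmt3Aux.mkq k m n (X (Sum.inr j₀)) ∈ QA :=
      Ideal.mem_map_of_mem _ (Ideal.subset_span ⟨Sum.inr j₀, ⟨j₀, rfl⟩, rfl⟩)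
    have hx1q : Stmt3Aux.mkq k m n (X (Sum.inl i₀)) * q = 0 := hPQ_zero _ hx1PA q hq
    have hy1p : p * Stmt3Aux.mkq k m n (X (Sum.inr j₀)) = 0 := hPQ_zero p hp _ hy1QA
    have hx1b : Stmt3Aux.mkq k m n (X (Sum.inl i₀)) * b = 0 :=
      hf_nzd _ (by linear_combination Stmt3Aux.mkq k m n (X (Sum.inl i₀)) * hb + hx1q)
    have hy1a : Stmt3Aux.mkq k m n (X (Sum.inr j₀)) * a = 0 :=
      hf_nzd _ (by linear_combination Stmt3Aux.mkq k m n (X (Sum.inr j₀)) * ha + hy1p)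
    have haPA : a ∈ PA := hPA_of a hy1a
    have ha1QA : a - 1 ∈ QA := hQA_of (a - 1)
      (by linear_combination (-1 : Stmt3Aux.Aq k m n) * hx1b
            + Stmt3Aux.mkq k m n (X (Sum.inl i₀)) * h3)
    have h1mem : (1 : Stmt3Aux.Aq k m n) ∈ mA := by
      rw [hmA_sup]
      have he : (1 : Stmt3Aux.Aq k m n) = a - (a - 1) := by ring
      rw [he]
      exact Ideal.sub_mem _ (Ideal.mem_sup_left haPA) (Ideal.mem_sup_right ha1QA)
    exact hmA_ne ((Ideal.eq_top_iff_one _).2 h1mem)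
  -- conclude
  unfold depthAt
  exact le_antisymm (csSup_le ⟨1, h1S⟩ hub) (le_csSup ⟨1, hub⟩ h1S)
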